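/- Let K be a field of characteristic zero and g a K-algebra with multiplication [ , ]. Then g satisfies the Leibniz identity [[a,b],c] = [a,[b,c]] − [b,[a,c]] for all a,b,c ∈ g if and only if the space of g-valued distributions satisfies the conformal Jacobi identity: for all distributions a, b, c : ℤ → g, all t, s ∈ ℕ, and all u ∈ ℤ, (a_t(b_s c))_u − (b_s(a_t c))_u = Σ_{i=0}^{t} (t choose i) ((a_i b)_{t+s−i} c)_u, where x_i y denotes the i-th product of distributions. -/

import Mathlib

open Finset

private lemma shift_sum {M : Type*} [AddCommMonoid M] (g : ℕ → M) (j T : ℕ)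
    (h1 : ∀ i, i < j → g i = 0) (h2 : ∀ i, T < i → g i = 0) :
    ∑ i ∈ Finset.range (T+1), g i = ∑ p ∈ Finset.range (T+1), g (p + j) := by
  have A : ∑ i ∈ Finset.range (T+1+j), g i = ∑ i ∈ Finset.range (T+1), g i := by
    refine (Finset.sum_subset (by intro x hx; simp at *; omega) ?_).symm
    intro x _ hx; simp at hx; exact h2 x (by omega)
  rw [← A, Finset.range_eq_Ico, ← Finset.sum_Ico_consecutive _ (Nat.zero_le j) (by omega)]
  have hz : ∑ i ∈ Finset.Ico 0 j, g i = 0 :=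
    Finset.sum_eq_zero (fun i hi => h1 i (by simp at hi; omega))
  rw [hz, zero_add, Finset.sum_Ico_eq_sum_range]
  have hT : T+1+j-j = T+1 := by omega
  rw [hT]
  exact Finset.sum_congr rfl (fun i _ => by rw [add_comm])

private lemma key_sum (n : ℕ) : ∀ N m : ℕ, n ≤ N →
    ∑ j ∈ Finset.range (n+1), (-1:ℤ)^j * (n.choose j) * ((N-j).choose m)
      = if n ≤ m then ((N-n).choose (m-n) : ℤ) else 0 := by
  induction n with
  | zero => intro N m _; simp
  | succ n ih =>
    intro N m hN
    have hN1 : 1 ≤ N := by omega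
    have hn : n ≤ N - 1 := by omega
    rw [Finset.sum_range_succ']
    have e1 : ∀ j ∈ Finset.range (n+1),
        (-1:ℤ)^(j+1) * ((n+1).choose (j+1)) * ((N-(j+1)).choose m)
        = -((-1:ℤ)^j * (n.choose j) * (((N-1)-j).choose m))
          + (-1:ℤ)^(j+1) * (n.choose (j+1)) * ((N-(j+1)).choose m) := by
      intro j _
      have : N - (j+1) = (N-1) - j := by omega
      rw [this, Nat.choose_succ_succ]
      push_cast
      ring
    rw [Finset.sum_congr rfl e1, Finset.sum_add_distrib]
    have e2 : ∑ j ∈ Finset.range (n+1),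
        (-((-1:ℤ)^j * (n.choose j) * (((N-1)-j).choose m)))
        = -(if n ≤ m then (((N-1)-n).choose (m-n) : ℤ) else 0) := by
      rw [Finset.sum_neg_distrib, ih (N-1) m hn]
    have e3 : (∑ j ∈ Finset.range (n+1),
        (-1:ℤ)^(j+1) * (n.choose (j+1)) * ((N-(j+1)).choose m))
        + (-1:ℤ)^0 * (((n+1).choose 0 : ℕ) : ℤ) * ((N-0).choose m)
        = if n ≤ m then ((N-n).choose (m-n) : ℤ) else 0 := by
      have h0 := (Finset.sum_range_succ'
        (fun j => (-1:ℤ)^j * (n.choose j) * ((N-j).choose m)) (n+1)).symm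
      have h1 : ∑ j ∈ Finset.range (n+2), (-1:ℤ)^j * (n.choose j) * ((N-j).choose m)
          = ∑ j ∈ Finset.range (n+1), (-1:ℤ)^j * (n.choose j) * ((N-j).choose m) := by
        rw [Finset.sum_range_succ, Nat.choose_succ_self]
        simp
      calc (∑ j ∈ Finset.range (n+1), (-1:ℤ)^(j+1) * (n.choose (j+1)) * ((N-(j+1)).choose m))
            + (-1:ℤ)^0 * (((n+1).choose 0 : ℕ) : ℤ) * ((N-0).choose m)
          = (∑ j ∈ Finset.range (n+1), (-1:ℤ)^(j+1) * (n.choose (j+1)) * ((N-(j+1)).choose m))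
            + (-1:ℤ)^0 * ((n.choose 0 : ℕ) : ℤ) * ((N-0).choose m) := by norm_num
        _ = ∑ j ∈ Finset.range (n+2), (-1:ℤ)^j * (n.choose j) * ((N-j).choose m) := h0
        _ = ∑ j ∈ Finset.range (n+1), (-1:ℤ)^j * (n.choose j) * ((N-j).choose m) := h1
        _ = if n ≤ m then ((N-n).choose (m-n) : ℤ) else 0 := ih N m (by omega)
    rw [e2, add_assoc, e3]
    by_cases hm : n + 1 ≤ m
    · have h1 : n ≤ m := by omega
      simp only [if_pos hm, if_pos h1]
      have : (N-n).choose (m-n) = (N-(n+1)).choose (m-(n+1)) + ((N-1)-n).choose (m-n) := by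
        have h2 : N - n = ((N-1)-n) + 1 := by omega
        have h3 : m - n = (m-(n+1)) + 1 := by omega
        have hA : (N-1)-n = N-(n+1) := by omega
        have hB : m-(n+1)+1 = m-n := by omega
        rw [h2, h3, Nat.choose_succ_succ, hA, Nat.succ_eq_add_one, hB]
      rw [this]
      push_cast
      ring
    · by_cases h1 : n ≤ m
      · have hm' : m = n := by omega
        subst hm'
        simp
      · simp [h1, hm]

private lemma choose_mul' (t p j : ℕ) (hp : p ≤ t) :
    (t.choose (p+j)) * ((p+j).choose j) = t.choose p * ((t-p).choose j) := by
  by_cases h : p + j ≤ t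
  · have h0 := Nat.choose_mul (n := t) (k := p+j) (s := p) (Nat.le_add_right p j)
    have h1 : (p+j).choose j = (p+j).choose p := (Nat.choose_symm_add).symm
    have h2 : p + j - p = j := by omega
    rw [h1, h0, h2]
  · have h1 : t.choose (p+j) = 0 := Nat.choose_eq_zero_of_lt (by omega)
    have h2 : (t-p).choose j = 0 := Nat.choose_eq_zero_of_lt (by omega)
    rw [h1, h2]
    simp

private lemma coeff_id (t s p m : ℕ) (hp : p ≤ t) :
    ∑ j ∈ Finset.range (t+1),
      ((-1:ℤ)^j * (t.choose (p+j)) * (((t+s-p)-j).choose m) * ((p+j).choose j))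
    = if t-p ≤ m then ((t.choose p : ℤ) * ((s.choose (m-(t-p))) : ℤ)) else 0 := by
  have e1 : ∀ j ∈ Finset.range (t+1),
      ((-1:ℤ)^j * (t.choose (p+j)) * (((t+s-p)-j).choose m) * ((p+j).choose j))
      = (t.choose p : ℤ) * ((-1:ℤ)^j * ((t-p).choose j) * (((t+s-p)-j).choose m)) := by
    intro j _
    have h2 : ((t.choose (p+j) : ℕ) : ℤ) * (((p+j).choose j : ℕ) : ℤ)
        = ((t.choose p : ℕ) : ℤ) * (((t-p).choose j : ℕ) : ℤ) := by
      exact_mod_cast congrArg (fun x : ℕ => (x : ℤ)) (choose_mul' t p j hp)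
    calc ((-1:ℤ)^j * (t.choose (p+j)) * (((t+s-p)-j).choose m) * ((p+j).choose j))
        = ((-1:ℤ)^j * (((t+s-p)-j).choose m)) * ((t.choose (p+j) : ℤ) * ((p+j).choose j)) := by
          ring
      _ = ((-1:ℤ)^j * (((t+s-p)-j).choose m)) * ((t.choose p : ℤ) * ((t-p).choose j)) := by
          rw [h2]
      _ = (t.choose p : ℤ) * ((-1:ℤ)^j * ((t-p).choose j) * (((t+s-p)-j).choose m)) := by ring
  rw [Finset.sum_congr rfl e1, ← Finset.mul_sum]
  have e2 : ∑ j ∈ Finset.range (t+1), ((-1:ℤ)^j * ((t-p).choose j) * (((t+s-p)-j).choose m))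
      = ∑ j ∈ Finset.range ((t-p)+1), ((-1:ℤ)^j * ((t-p).choose j) * (((t+s-p)-j).choose m)) := by
    refine (Finset.sum_subset ?_ ?_).symm
    · intro x hx; simp at *; omega
    · intro x _ hx
      simp only [Finset.mem_range] at hx
      rw [Nat.choose_eq_zero_of_lt (by omega)]
      simp
  rw [e2, key_sum (t-p) (t+s-p) m (by omega)]
  have e3 : t+s-p-(t-p) = s := by omega
  rw [e3, mul_ite, mul_zero]

private lemma double_eq_nf {M : Type*} [AddCommGroup M] (f : ℤ → ℤ → ℤ → M) (t s : ℕ) :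
    ∑ k ∈ Finset.range (t+1), ∑ l ∈ Finset.range (s+1),
        (((-1:ℤ)^k * (t.choose k)) * ((-1:ℤ)^l * (s.choose l))) •
          f ((t:ℤ)-k) ((s:ℤ)-l) ((k:ℤ)+(l:ℤ))
    = ∑ p ∈ Finset.range (t+1), ∑ m ∈ Finset.range (t+s+1),
        (if t-p ≤ m then ((-1:ℤ)^m * ((t.choose p : ℤ) * ((s.choose (m-(t-p))) : ℤ))) else 0) •
          f (p:ℤ) ((t:ℤ)+(s:ℤ)-(p:ℤ)-(m:ℤ)) (m:ℤ) := by
  rw [← Finset.sum_range_reflect]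
  refine Finset.sum_congr rfl ?_
  intro p hp
  simp only [Finset.mem_range] at hp
  have hpt : p ≤ t := by omega
  have ht1 : t + 1 - 1 - p = t - p := by omega
  rw [ht1]
  set g : ℕ → M := fun m =>
    (if t-p ≤ m then ((-1:ℤ)^m * ((t.choose p : ℤ) * ((s.choose (m-(t-p))) : ℤ))) else 0) •
      f (p:ℤ) ((t:ℤ)+(s:ℤ)-(p:ℤ)-(m:ℤ)) (m:ℤ) with hg
  have hshift : ∑ m ∈ Finset.range (t+s+1), g m
      = ∑ l ∈ Finset.range (t+s+1), g (l + (t-p)) := by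
    refine shift_sum g (t-p) (t+s) ?_ ?_
    · intro i hi
      rw [hg]
      simp only [if_neg (by omega : ¬ t - p ≤ i)]
      exact zero_smul _ _
    · intro i hi
      rw [hg]
      simp only
      rw [Nat.choose_eq_zero_of_lt (by omega : s < i - (t-p))]
      simp
  have hcut : ∑ l ∈ Finset.range (t+s+1), g (l + (t-p))
      = ∑ l ∈ Finset.range (s+1), g (l + (t-p)) := by
    refine (Finset.sum_subset ?_ ?_).symm
    · intro x hx; simp at *; omega
    · intro x _ hx
      simp only [Finset.mem_range] at hx
      rw [hg]
      simp only
      rw [Nat.choose_eq_zero_of_lt (by omega : s < x + (t-p) - (t-p))]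
      simp
  rw [hshift, hcut]
  refine Finset.sum_congr rfl ?_
  intro l hl
  simp only [Finset.mem_range] at hl
  rw [hg]
  simp only [if_pos (by omega : t - p ≤ l + (t-p))]
  have harg : l + (t-p) - (t-p) = l := by omega
  rw [harg]
  have hcast : ((l + (t-p) : ℕ) : ℤ) = (l : ℤ) + ((t:ℤ) - (p:ℤ)) := by
    push_cast [Nat.cast_sub hpt]
    ring
  have hcast2 : ((t - p : ℕ) : ℤ) = (t:ℤ) - (p:ℤ) := by
    push_cast [Nat.cast_sub hpt]
    ring
  have hsymm : t.choose (t-p) = t.choose p := Nat.choose_symm hpt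
  rw [hsymm]
  have hco : ((-1:ℤ)^(l + (t-p)) * ((t.choose p : ℤ) * ((s.choose l) : ℤ)))
      = (((-1:ℤ)^(t-p) * (t.choose p)) * ((-1:ℤ)^l * (s.choose l))) := by
    rw [pow_add]
    ring
  rw [hco, hcast, hcast2]
  congr 1 <;> ring_nf

private lemma triple_eq_nf {M : Type*} [AddCommGroup M] (f : ℤ → ℤ → ℤ → M) (t s : ℕ) :
    ∑ i ∈ Finset.range (t+1), ∑ m ∈ Finset.range ((t+s-i)+1), ∑ j ∈ Finset.range (i+1),
      ((t.choose i : ℤ) * ((-1:ℤ)^m * (((t+s-i).choose m) : ℤ))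
          * ((-1:ℤ)^j * ((i.choose j) : ℤ))) •
        f ((i:ℤ)-(j:ℤ)) ((((t+s-i : ℕ)) : ℤ) - (m:ℤ) + (j:ℤ)) (m:ℤ)
    = ∑ p ∈ Finset.range (t+1), ∑ m ∈ Finset.range (t+s+1),
        (if t-p ≤ m then ((-1:ℤ)^m * ((t.choose p : ℤ) * ((s.choose (m-(t-p))) : ℤ))) else 0) •
          f (p:ℤ) ((t:ℤ)+(s:ℤ)-(p:ℤ)-(m:ℤ)) (m:ℤ) := by
  set c : ℕ → ℕ → ℕ → ℤ := fun i m j =>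
    ((t.choose i : ℤ) * ((-1:ℤ)^m * (((t+s-i).choose m) : ℤ)) * ((-1:ℤ)^j * ((i.choose j) : ℤ)))
    with hc
  set F : ℕ → ℕ → ℕ → M := fun i m j =>
    f ((i:ℤ)-(j:ℤ)) ((((t+s-i : ℕ)) : ℤ) - (m:ℤ) + (j:ℤ)) (m:ℤ) with hF
  have step1 : ∑ i ∈ Finset.range (t+1), ∑ m ∈ Finset.range ((t+s-i)+1),
        ∑ j ∈ Finset.range (i+1), c i m j • F i m j
      = ∑ i ∈ Finset.range (t+1), ∑ m ∈ Finset.range (t+s+1),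
        ∑ j ∈ Finset.range (t+1), c i m j • F i m j := by
    refine Finset.sum_congr rfl ?_
    intro i hi
    simp only [Finset.mem_range] at hi
    have e1 : ∀ m, (∑ j ∈ Finset.range (i+1), c i m j • F i m j)
        = ∑ j ∈ Finset.range (t+1), c i m j • F i m j := by
      intro m
      refine Finset.sum_subset (by intro x hx; simp at *; omega) ?_
      intro x _ hx
      simp only [Finset.mem_range] at hx
      rw [hc]
      simp only
      rw [Nat.choose_eq_zero_of_lt (by omega : i < x)]
      simp
    rw [Finset.sum_congr rfl (fun m _ => e1 m)]
    refine Finset.sum_subset (by intro x hx; simp at *; omega) ?_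
    intro x _ hx
    simp only [Finset.mem_range] at hx
    refine Finset.sum_eq_zero ?_
    intro j _
    rw [hc]
    simp only
    rw [Nat.choose_eq_zero_of_lt (by omega : t+s-i < x)]
    simp
  rw [step1, Finset.sum_comm]
  have step2 : ∀ m ∈ Finset.range (t+s+1),
      (∑ i ∈ Finset.range (t+1), ∑ j ∈ Finset.range (t+1), c i m j • F i m j)
      = ∑ j ∈ Finset.range (t+1), ∑ p ∈ Finset.range (t+1), c (p+j) m j • F (p+j) m j := by
    intro m _
    rw [Finset.sum_comm]
    refine Finset.sum_congr rfl ?_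
    intro j _
    refine shift_sum (fun i => c i m j • F i m j) j t ?_ ?_
    · intro i hi
      rw [hc]
      simp only
      rw [Nat.choose_eq_zero_of_lt (by omega : i < j)]
      simp
    · intro i hi
      rw [hc]
      simp only
      rw [Nat.choose_eq_zero_of_lt (by omega : t < i)]
      simp
  rw [Finset.sum_congr rfl step2]
  have step3 : ∀ m ∈ Finset.range (t+s+1), ∀ j ∈ Finset.range (t+1), ∀ p ∈ Finset.range (t+1),
      c (p+j) m j • F (p+j) m j
      = ((-1:ℤ)^m * ((-1:ℤ)^j * ((t.choose (p+j)) : ℤ) * ((((t+s-p)-j).choose m) : ℤ)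
          * (((p+j).choose j) : ℤ))) •
        f (p:ℤ) ((t:ℤ)+(s:ℤ)-(p:ℤ)-(m:ℤ)) (m:ℤ) := by
    intro m _ j hj p hp
    simp only [Finset.mem_range] at hj hp
    by_cases hpj : p + j ≤ t
    · have h1 : t+s-(p+j) = (t+s-p)-j := by omega
      have h2 : (((t+s-(p+j) : ℕ)) : ℤ) = (t:ℤ)+(s:ℤ)-(p:ℤ)-(j:ℤ) := by
        rw [Nat.cast_sub (by omega)]
        push_cast
        ring
      rw [hc, hF]
      simp only
      rw [h1]
      congr 1
      · ring
      · congr 1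
        · push_cast; ring
        · rw [h1] at h2
          rw [h2]; ring
    · have h1 : t.choose (p+j) = 0 := Nat.choose_eq_zero_of_lt (by omega)
      rw [hc]
      simp only [h1]
      push_cast
      simp
  rw [Finset.sum_congr rfl (fun m hm => Finset.sum_congr rfl (fun j hj =>
    Finset.sum_congr rfl (fun p hp => step3 m hm j hj p hp)))]
  have step4 : ∀ m ∈ Finset.range (t+s+1),
      (∑ j ∈ Finset.range (t+1), ∑ p ∈ Finset.range (t+1),
        ((-1:ℤ)^m * ((-1:ℤ)^j * ((t.choose (p+j)) : ℤ) * ((((t+s-p)-j).choose m) : ℤ)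
          * (((p+j).choose j) : ℤ))) • f (p:ℤ) ((t:ℤ)+(s:ℤ)-(p:ℤ)-(m:ℤ)) (m:ℤ))
      = ∑ p ∈ Finset.range (t+1),
        (if t-p ≤ m then ((-1:ℤ)^m * ((t.choose p : ℤ) * ((s.choose (m-(t-p))) : ℤ))) else 0) •
          f (p:ℤ) ((t:ℤ)+(s:ℤ)-(p:ℤ)-(m:ℤ)) (m:ℤ) := by
    intro m _
    rw [Finset.sum_comm]
    refine Finset.sum_congr rfl ?_
    intro p hp
    simp only [Finset.mem_range] at hp
    have collapse : ∑ j ∈ Finset.range (t+1),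
        ((-1:ℤ)^m * ((-1:ℤ)^j * ((t.choose (p+j)) : ℤ) * ((((t+s-p)-j).choose m) : ℤ)
          * (((p+j).choose j) : ℤ))) • f (p:ℤ) ((t:ℤ)+(s:ℤ)-(p:ℤ)-(m:ℤ)) (m:ℤ)
        = (∑ j ∈ Finset.range (t+1),
            ((-1:ℤ)^m * ((-1:ℤ)^j * ((t.choose (p+j)) : ℤ) * ((((t+s-p)-j).choose m) : ℤ)
            * (((p+j).choose j) : ℤ)))) • f (p:ℤ) ((t:ℤ)+(s:ℤ)-(p:ℤ)-(m:ℤ)) (m:ℤ) :=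
      (Finset.sum_smul).symm
    rw [collapse, ← Finset.mul_sum, coeff_id t s p m (by omega), mul_ite, mul_zero]
  rw [Finset.sum_congr rfl step4, Finset.sum_comm]

private lemma main_sum {M : Type*} [AddCommGroup M] (f : ℤ → ℤ → ℤ → M) (t s : ℕ) :
    ∑ i ∈ Finset.range (t+1), ∑ m ∈ Finset.range ((t+s-i)+1), ∑ j ∈ Finset.range (i+1),
      ((t.choose i : ℤ) * ((-1:ℤ)^m * (((t+s-i).choose m) : ℤ))
          * ((-1:ℤ)^j * ((i.choose j) : ℤ))) •
        f ((i:ℤ)-(j:ℤ)) ((((t+s-i : ℕ)) : ℤ) - (m:ℤ) + (j:ℤ)) (m:ℤ)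
    = ∑ k ∈ Finset.range (t+1), ∑ l ∈ Finset.range (s+1),
        (((-1:ℤ)^k * (t.choose k)) * ((-1:ℤ)^l * (s.choose l))) •
          f ((t:ℤ)-k) ((s:ℤ)-l) ((k:ℤ)+(l:ℤ)) :=
  (triple_eq_nf f t s).trans (double_eq_nf f t s).symm

section

variable {K : Type*} [Field K] {g : Type*} [AddCommGroup g] [Module K g]

/-- The `i`-th product of distributions with values in the algebra `(g, br)`:
`(a_i b)_u = Σ_{k=0}^{i} (−1)^k (i choose k) [a_{i−k}, b_{u+k}]`. -/
def distProd (br : g →ₗ[K] g →ₗ[K] g) (a b : ℤ → g) (i : ℕ) : ℤ → g :=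
  fun u => ∑ k ∈ Finset.range (i + 1),
    ((-1 : ℤ) ^ k * (i.choose k : ℤ)) • br (a ((i : ℤ) - (k : ℤ))) (b (u + (k : ℤ)))

end

/-- An algebra `(g, [ , ])` satisfies the Leibniz identity iff the `g`-valued
distributions satisfy the conformal Jacobi identity (in coefficient form):
`(a_t(b_s c))_u − (b_s(a_t c))_u = Σ_{i=0}^{t} (t choose i) ((a_i b)_{t+s−i} c)_u`. -/
theorem leibniz_iff_conformal_jacobi
    (K : Type*) [Field K] [CharZero K]
    (g : Type*) [AddCommGroup g] [Module K g]
    (br : g →ₗ[K] g →ₗ[K] g) :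
    (∀ x y z : g, br (br x y) z = br x (br y z) - br y (br x z)) ↔
    (∀ (a b c : ℤ → g) (t s : ℕ) (u : ℤ),
      distProd br a (distProd br b c s) t u - distProd br b (distProd br a c t) s u =
        ∑ i ∈ Finset.range (t + 1),
          (t.choose i : ℤ) • distProd br (distProd br a b i) c (t + s - i) u) := by
  constructor
  · intro hL a b c t s u
    have hL1 : distProd br a (distProd br b c s) t u
        = ∑ k ∈ Finset.range (t+1), ∑ l ∈ Finset.range (s+1),
            (((-1:ℤ)^k * (t.choose k)) * ((-1:ℤ)^l * (s.choose l))) •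
              br (a ((t:ℤ)-k)) (br (b ((s:ℤ)-l)) (c (u + ((k:ℤ)+(l:ℤ))))) := by
      simp only [distProd, map_sum, map_zsmul, Finset.smul_sum, smul_smul]
      refine Finset.sum_congr rfl fun k _ => Finset.sum_congr rfl fun l _ => ?_
      congr 2
      ring
    have hL2 : distProd br b (distProd br a c t) s u
        = ∑ k ∈ Finset.range (t+1), ∑ l ∈ Finset.range (s+1),
            (((-1:ℤ)^k * (t.choose k)) * ((-1:ℤ)^l * (s.choose l))) •
              br (b ((s:ℤ)-l)) (br (a ((t:ℤ)-k)) (c (u + ((k:ℤ)+(l:ℤ))))) := by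
      simp only [distProd, map_sum, map_zsmul, Finset.smul_sum, smul_smul]
      rw [Finset.sum_comm]
      refine Finset.sum_congr rfl fun k _ => Finset.sum_congr rfl fun l _ => ?_
      have h1 : u + (l:ℤ) + (k:ℤ) = u + ((k:ℤ)+(l:ℤ)) := by ring
      rw [h1]
      congr 1
      ring
    have hR : ∑ i ∈ Finset.range (t + 1),
          (t.choose i : ℤ) • distProd br (distProd br a b i) c (t + s - i) u
        = (∑ i ∈ Finset.range (t+1), ∑ m ∈ Finset.range ((t+s-i)+1), ∑ j ∈ Finset.range (i+1),
            ((t.choose i : ℤ) * ((-1:ℤ)^m * (((t+s-i).choose m) : ℤ))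
              * ((-1:ℤ)^j * ((i.choose j) : ℤ))) •
              br (a ((i:ℤ)-(j:ℤ))) (br (b ((((t+s-i) : ℕ) : ℤ) - (m:ℤ) + (j:ℤ))) (c (u + (m:ℤ)))))
          - (∑ i ∈ Finset.range (t+1), ∑ m ∈ Finset.range ((t+s-i)+1),
              ∑ j ∈ Finset.range (i+1),
            ((t.choose i : ℤ) * ((-1:ℤ)^m * (((t+s-i).choose m) : ℤ))
              * ((-1:ℤ)^j * ((i.choose j) : ℤ))) •
              br (b ((((t+s-i) : ℕ) : ℤ) - (m:ℤ) + (j:ℤ))) (br (a ((i:ℤ)-(j:ℤ))) (c (u + (m:ℤ))))) := by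
      have expand : ∑ i ∈ Finset.range (t + 1),
            (t.choose i : ℤ) • distProd br (distProd br a b i) c (t + s - i) u
          = ∑ i ∈ Finset.range (t+1), ∑ m ∈ Finset.range ((t+s-i)+1), ∑ j ∈ Finset.range (i+1),
              ((t.choose i : ℤ) * ((-1:ℤ)^m * (((t+s-i).choose m) : ℤ))
                * ((-1:ℤ)^j * ((i.choose j) : ℤ))) •
                br (br (a ((i:ℤ)-(j:ℤ))) (b ((((t+s-i) : ℕ) : ℤ) - (m:ℤ) + (j:ℤ))))
                  (c (u + (m:ℤ))) := by
        simp only [distProd, map_sum, map_zsmul, LinearMap.sum_apply, LinearMap.smul_apply,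
          Finset.smul_sum, smul_smul]
        refine Finset.sum_congr rfl fun i _ => Finset.sum_congr rfl fun m _ =>
          Finset.sum_congr rfl fun j _ => ?_
        congr 1
        ring
      rw [expand]
      rw [← Finset.sum_sub_distrib]
      refine Finset.sum_congr rfl fun i _ => ?_
      rw [← Finset.sum_sub_distrib]
      refine Finset.sum_congr rfl fun m _ => ?_
      rw [← Finset.sum_sub_distrib]
      refine Finset.sum_congr rfl fun j _ => ?_
      rw [hL, smul_sub]
    rw [hL1, hL2, hR,
      main_sum (fun x y m => br (a x) (br (b y) (c (u + m)))) t s,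
      main_sum (fun x y m => br (b y) (br (a x) (c (u + m)))) t s,
      ← Finset.sum_sub_distrib]
  · intro h x y z
    have := h (fun _ => x) (fun _ => y) (fun _ => z) 0 0 0
    simp [distProd] at this
    exact this.symm
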